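/- If α > 0 and μ' ∈ C⁺(γ) has two rows k ≠ k' and two column indices j < j' with μ'_{kj} < μ'_{kj'} and μ'_{k'j} > μ'_{k'j'}, then μ' is not a maximum point of G on C(γ). Equivalently, at a maximum point of G all rows can be simultaneously ordered by a single permutation σ ∈ S_q with μ'_{kσ(1)} ≤ … ≤ μ'_{kσ(q)} for all k. -/
import Mathlib

def Cset (s q : ℕ) (γ : Fin s → ℝ) : Set (Fin s → Fin q → ℝ) :=
  {μ | (∀ k c, 0 ≤ μ k c) ∧ ∀ k, ∑ c, μ k c = γ k}

noncomputable def G (s q : ℕ) (α β : ℝ) (μ : Fin s → Fin q → ℝ) : ℝ :=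
  (∑ c, ∑ k, β / 2 * (μ k c) ^ 2)
    + (∑ c, ∑ k, ∑ k' ∈ Finset.univ.filter (fun k' => k' ≠ k), α / 2 * (μ k c * μ k' c))
    - ∑ k, ∑ c, μ k c * Real.log (μ k c)

lemma cross_sum {s : ℕ} (μ : Fin s → ℝ) :
    ∑ k, ∑ k' ∈ Finset.univ.filter (fun k' => k' ≠ k), μ k * μ k'
      = (∑ k, μ k)^2 - ∑ k, (μ k)^2 := by
  have h : ∀ k : Fin s, ∑ k' ∈ Finset.univ.filter (fun k' => k' ≠ k), μ k * μ k'
      = μ k * (∑ k', μ k') - μ k * μ k := by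
    intro k
    rw [Finset.filter_ne', ← Finset.mul_sum,
      Finset.sum_erase_eq_sub (Finset.mem_univ k), mul_sub]
  rw [Finset.sum_congr rfl fun k _ => h k, Finset.sum_sub_distrib, ← Finset.sum_mul]
  ring_nf

lemma G_eq (s q : ℕ) (α β : ℝ) (μ : Fin s → Fin q → ℝ) :
    G s q α β μ = (β - α)/2 * (∑ k, ∑ c, (μ k c)^2)
      + α/2 * ∑ c, (∑ k, μ k c)^2
      - ∑ k, ∑ c, μ k c * Real.log (μ k c) := by
  unfold G
  have e1 : ∑ c, ∑ k, β / 2 * (μ k c) ^ 2 = β/2 * ∑ k, ∑ c, (μ k c)^2 := by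
    rw [Finset.sum_comm]
    simp [Finset.mul_sum]
  have e2 : ∑ c, ∑ k, ∑ k' ∈ Finset.univ.filter (fun k' => k' ≠ k),
      α / 2 * (μ k c * μ k' c)
      = α/2 * ∑ c, (∑ k, μ k c)^2 - α/2 * ∑ k, ∑ c, (μ k c)^2 := by
    have h : ∀ c : Fin q, ∑ k, ∑ k' ∈ Finset.univ.filter (fun k' => k' ≠ k),
        α / 2 * (μ k c * μ k' c)
        = α/2 * ((∑ k, μ k c)^2 - ∑ k, (μ k c)^2) := by
      intro c
      rw [← cross_sum (fun k => μ k c)]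
      simp [Finset.mul_sum]
    rw [Finset.sum_congr rfl fun c _ => h c, ← Finset.mul_sum]
    have hcomm : ∑ c, ∑ k, (μ k c)^2 = ∑ k, ∑ c, (μ k c)^2 := Finset.sum_comm
    rw [Finset.sum_sub_distrib, hcomm]
    ring
  rw [e1, e2]
  ring

lemma swap_mem {s q : ℕ} {γ : Fin s → ℝ} {μ : Fin s → Fin q → ℝ}
    (hμ : μ ∈ Cset s q γ) (t : Fin s) (j j' : Fin q) :
    Function.update μ t (fun c => μ t (Equiv.swap j j' c)) ∈ Cset s q γ := by
  obtain ⟨h0, hsum⟩ := hμ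
  constructor
  · intro k c
    by_cases hk : k = t
    · subst hk; simp [Function.update_self]; exact h0 _ _
    · simp [Function.update_of_ne hk]; exact h0 _ _
  · intro k
    by_cases hk : k = t
    · subst hk
      simp only [Function.update_self]
      rw [← hsum k]
      exact Equiv.sum_comp (Equiv.swap j j') (fun c => μ k c)
    · simp [Function.update_of_ne hk]; exact hsum k

lemma G_swap (s q : ℕ) (α β : ℝ) (μ : Fin s → Fin q → ℝ)
    (t : Fin s) (j j' : Fin q) (hjj : j ≠ j') :
    G s q α β (Function.update μ t (fun c => μ t (Equiv.swap j j' c)))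
      = G s q α β μ
        + α * (μ t j' - μ t j) * ((∑ k, μ k j) - (∑ k, μ k j'))
        + α * (μ t j' - μ t j)^2 := by
  set ν := Function.update μ t (fun c => μ t (Equiv.swap j j' c)) with hν
  have hνt : ∀ c, ν t c = μ t (Equiv.swap j j' c) := fun c => by
    simp [hν, Function.update_self]
  have hνk : ∀ k, k ≠ t → ν k = μ k := fun k hk => Function.update_of_ne hk _ _
  -- squares per row invariant
  have hsq : ∑ k, ∑ c, (ν k c)^2 = ∑ k, ∑ c, (μ k c)^2 := by
    refine Finset.sum_congr rfl fun k _ => ?_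
    by_cases hk : k = t
    · subst hk
      simp only [hνt]
      exact Equiv.sum_comp (Equiv.swap j j') (fun c => (μ k c)^2)
    · rw [hνk k hk]
  -- entropy per row invariant
  have hent : ∑ k, ∑ c, ν k c * Real.log (ν k c)
      = ∑ k, ∑ c, μ k c * Real.log (μ k c) := by
    refine Finset.sum_congr rfl fun k _ => ?_
    by_cases hk : k = t
    · subst hk
      simp only [hνt]
      exact Equiv.sum_comp (Equiv.swap j j') (fun c => μ k c * Real.log (μ k c))
    · rw [hνk k hk]
  -- column sums
  have hcol : ∀ c, ∑ k, ν k c = (∑ k, μ k c) + (μ t (Equiv.swap j j' c) - μ t c) := by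
    intro c
    have : ∀ k, ν k c = μ k c + (if k = t then μ t (Equiv.swap j j' c) - μ t c else 0) := by
      intro k
      by_cases hk : k = t
      · subst hk; simp [hνt]
      · simp [hνk k hk, hk]
    rw [Finset.sum_congr rfl fun k _ => this k, Finset.sum_add_distrib]
    simp
  have hcolj : ∑ k, ν k j = (∑ k, μ k j) + (μ t j' - μ t j) := by
    rw [hcol j, Equiv.swap_apply_left]
  have hcolj' : ∑ k, ν k j' = (∑ k, μ k j') - (μ t j' - μ t j) := by
    rw [hcol j', Equiv.swap_apply_right]; ring
  have hcolo : ∀ c, c ≠ j → c ≠ j' → ∑ k, ν k c = ∑ k, μ k c := by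
    intro c h1 h2
    rw [hcol c, Equiv.swap_apply_of_ne_of_ne h1 h2]; ring
  -- sum of squared column sums
  have hS : ∑ c, (∑ k, ν k c)^2 - ∑ c, (∑ k, μ k c)^2
      = (∑ k, ν k j)^2 + (∑ k, ν k j')^2 - (∑ k, μ k j)^2 - (∑ k, μ k j')^2 := by
    rw [← Finset.sum_sub_distrib]
    have hj'mem : j' ∈ Finset.univ.erase j :=
      Finset.mem_erase.mpr ⟨(Ne.symm hjj), Finset.mem_univ j'⟩
    rw [← Finset.add_sum_erase _ _ (Finset.mem_univ j),
      ← Finset.add_sum_erase _ _ hj'mem]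
    have hz : ∑ c ∈ (Finset.univ.erase j).erase j',
        ((∑ k, ν k c)^2 - (∑ k, μ k c)^2) = 0 := by
      refine Finset.sum_eq_zero fun c hc => ?_
      have hc1 : c ≠ j' := (Finset.mem_erase.mp hc).1
      have hc2 : c ≠ j := (Finset.mem_erase.mp (Finset.mem_erase.mp hc).2).1
      rw [hcolo c hc2 hc1]; ring
    rw [hz]
    ring
  rw [G_eq, G_eq, hsq, hent]
  have : ∑ c, (∑ k, ν k c)^2
      = ∑ c, (∑ k, μ k c)^2
        + ((∑ k, ν k j)^2 + (∑ k, ν k j')^2 - (∑ k, μ k j)^2 - (∑ k, μ k j')^2) := by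
    linarith [hS]
  rw [this, hcolj, hcolj']
  ring

theorem not_max_of_discordant_rows (s q : ℕ) (α β : ℝ) (hα : 0 < α) (hαβ : α < β)
    (γ : Fin s → ℝ) (hγ : ∀ k, γ k ∈ Set.Ioo (0 : ℝ) 1) (hγ1 : ∑ k, γ k = 1)
    (μ' : Fin s → Fin q → ℝ) (hμ' : μ' ∈ Cset s q γ)
    (hμ'pos : ∀ k c, μ' k c ∈ Set.Ioo (0 : ℝ) 1)
    (h : ∃ k k' : Fin s, k ≠ k' ∧ ∃ j j' : Fin q, j < j' ∧
      μ' k j < μ' k j' ∧ μ' k' j' < μ' k' j) :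
    ¬ IsMaxOn (G s q α β) (Cset s q γ) μ' := by
  obtain ⟨k, k', hkk', j, j', hjj, hk, hk'⟩ := h
  have hjj' : j ≠ j' := ne_of_lt hjj
  intro hmax
  rw [isMaxOn_iff] at hmax
  have h1 := hmax _ (swap_mem hμ' k j j')
  have h2 := hmax _ (swap_mem hμ' k' j j')
  rw [G_swap s q α β μ' k j j' hjj'] at h1
  rw [G_swap s q α β μ' k' j j' hjj'] at h2
  set Δ := (∑ m, μ' m j) - (∑ m, μ' m j') with hΔ
  set e1 := μ' k j' - μ' k j with he1
  set e2 := μ' k' j' - μ' k' j with he2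
  have he1pos : 0 < e1 := by simp [he1]; linarith
  have he2neg : e2 < 0 := by simp [he2]; linarith
  have h1' : α * e1 * Δ + α * e1^2 ≤ 0 := by linarith
  have h2' : α * e2 * Δ + α * e2^2 ≤ 0 := by linarith
  nlinarith [mul_pos hα he1pos, mul_pos hα (mul_pos he1pos he1pos),
    mul_pos hα (mul_pos (neg_pos.mpr he2neg) (neg_pos.mpr he2neg)), sq_nonneg e2]
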